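/- Let 2 ≤ k ≤ n and let A be an orthogonal array OA(k,n) of strength 2 and index 1, i.e. a family of n² rows, each a function from a k-element set of coordinates to an n-element symbol set, such that for every pair of distinct coordinates (a,b) the map sending a row r to the pair (r(a), r(b)) is a bijection onto the n² pairs of symbols. The block graph of A, whose vertices are the rows, two distinct rows adjacent if and only if they agree in at least one coordinate, is a strongly regular graph with parameters (n², k(n−1), (n−2)+(k−1)(k−2), k(k−1)). -/

import Mathlib

open Finset

open scoped Classical

section OA

variable {n k : ℕ} {A : Fin (n ^ 2) → Fin k → Fin n}

lemma oa_inj (hA : ∀ a b : Fin k, a ≠ b →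
      Function.Bijective (fun r : Fin (n ^ 2) => (A r a, A r b)))
    {r s : Fin (n ^ 2)} {a b : Fin k} (hab : a ≠ b)
    (h1 : A r a = A s a) (h2 : A r b = A s b) : r = s :=
  (hA a b hab).injective (show (A r a, A r b) = (A s a, A s b) by rw [h1, h2])

lemma oa_exists (hA : ∀ a b : Fin k, a ≠ b →
      Function.Bijective (fun r : Fin (n ^ 2) => (A r a, A r b)))
    {a b : Fin k} (hab : a ≠ b) (x y : Fin n) :
    ∃ t, A t a = x ∧ A t b = y := by
  obtain ⟨t, ht⟩ := (hA a b hab).surjective (x, y)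
  exact ⟨t, (Prod.ext_iff.mp ht).1, (Prod.ext_iff.mp ht).2⟩

noncomputable def oaRow (hA : ∀ a b : Fin k, a ≠ b →
      Function.Bijective (fun r : Fin (n ^ 2) => (A r a, A r b)))
    {a b : Fin k} (hab : a ≠ b) (x y : Fin n) : Fin (n ^ 2) :=
  Classical.choose (oa_exists hA hab x y)

lemma oaRow_spec (hA : ∀ a b : Fin k, a ≠ b →
      Function.Bijective (fun r : Fin (n ^ 2) => (A r a, A r b)))
    {a b : Fin k} (hab : a ≠ b) (x y : Fin n) :
    A (oaRow hA hab x y) a = x ∧ A (oaRow hA hab x y) b = y :=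
  Classical.choose_spec (oa_exists hA hab x y)

lemma oa_col (hA : ∀ a b : Fin k, a ≠ b →
      Function.Bijective (fun r : Fin (n ^ 2) => (A r a, A r b)))
    (hk : 2 ≤ k) (a : Fin k) (x : Fin n) :
    (univ.filter fun s => A s a = x).card = n := by
  obtain ⟨b, hb⟩ := Fintype.exists_ne_of_one_lt_card (by rw [Fintype.card_fin]; exact hk) a
  have hcard : (univ.filter fun s => A s a = x).card = (univ : Finset (Fin n)).card := by
    apply Finset.card_bij (fun s _ => A s b)
    · intro s _; exact mem_univ _
    · intro s hs s' hs' h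
      simp only [mem_filter, mem_univ, true_and] at hs hs'
      exact oa_inj hA hb h (hs.trans hs'.symm)
    · intro y _
      obtain ⟨t, h1, h2⟩ := oa_exists hA (Ne.symm hb) x y
      exact ⟨t, mem_filter.mpr ⟨mem_univ _, h1⟩, h2⟩
  rw [hcard, card_univ, Fintype.card_fin]

end OA

open scoped Classical in
/-- Block graph of an orthogonal array `OA(k,n)` of strength 2 and index 1: the rows are
indexed by `Fin (n^2)`, each row is a function `Fin k → Fin n`, and for every pair of
distinct coordinates the induced map to pairs of symbols is a bijection.  The graph whose
vertices are the rows, two distinct rows adjacent iff they agree in at least one coordinate,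
is strongly regular with parameters `(n², k(n−1), (n−2)+(k−1)(k−2), k(k−1))`. -/
theorem orthogonal_array_block_graph_isSRG (n k : ℕ) (hk : 2 ≤ k) (hkn : k ≤ n)
    (A : Fin (n ^ 2) → Fin k → Fin n)
    (hA : ∀ a b : Fin k, a ≠ b →
      Function.Bijective (fun r : Fin (n ^ 2) => (A r a, A r b)))
    (G : SimpleGraph (Fin (n ^ 2)))
    (hG : ∀ r s : Fin (n ^ 2), G.Adj r s ↔ r ≠ s ∧ ∃ a : Fin k, A r a = A s a) :
    G.IsSRGWith (n ^ 2) (k * (n - 1)) ((n - 2) + (k - 1) * (k - 2)) (k * (k - 1)) := by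
  have hn2 : 2 ≤ n := le_trans hk hkn
  have hT : ∀ r s : Fin (n ^ 2), Fintype.card (G.commonNeighbors r s) =
      (univ.filter (fun t => G.Adj r t ∧ G.Adj s t)).card := by
    intro r s
    rw [← Set.toFinset_card]
    congr 1
    ext t
    rw [Set.mem_toFinset]
    simp [SimpleGraph.commonNeighbors]
  constructor
  · simp
  · -- regularity
    intro r
    have hS : G.neighborFinset r = univ.biUnion (fun a : Fin k =>
        univ.filter (fun s => A s a = A r a ∧ s ≠ r)) := by
      ext t
      simp only [SimpleGraph.mem_neighborFinset, hG, mem_biUnion, mem_filter, mem_univ,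
        true_and]
      constructor
      · rintro ⟨hne, a, ha⟩
        exact ⟨a, ha.symm, fun h => hne h.symm⟩
      · rintro ⟨a, ha, hne⟩
        exact ⟨fun h => hne h.symm, a, ha.symm⟩
    have hdeg : G.degree r = (G.neighborFinset r).card := rfl
    rw [hdeg, hS, Finset.card_biUnion]
    · have hcard : ∀ a : Fin k,
          (univ.filter (fun s => A s a = A r a ∧ s ≠ r)).card = n - 1 := by
        intro a
        have he : univ.filter (fun s => A s a = A r a ∧ s ≠ r)
            = (univ.filter fun s => A s a = A r a).erase r := by
          ext t
          simp only [mem_filter, mem_univ, true_and, mem_erase]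
          tauto
        have hrm : r ∈ univ.filter (fun s => A s a = A r a) :=
          mem_filter.mpr ⟨mem_univ _, rfl⟩
        rw [he, card_erase_of_mem hrm, oa_col hA hk]
      rw [Finset.sum_congr rfl (fun a _ => hcard a)]
      simp [mul_comm]
    · intro a _ b _ hab
      rw [Function.onFun, Finset.disjoint_left]
      intro t ht ht'
      simp only [mem_filter, mem_univ, true_and] at ht ht'
      exact ht.2 (oa_inj hA hab ht.1 ht'.1)
  · -- lambda
    intro r s hadj
    rw [hG] at hadj
    obtain ⟨hrs, a, ha⟩ := hadj
    have honly : ∀ c, A r c = A s c → c = a := by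
      intro c hc
      by_contra hca
      exact hrs (oa_inj hA hca hc ha)
    rw [hT r s]
    have hsplit : univ.filter (fun t => G.Adj r t ∧ G.Adj s t)
        = (univ.filter (fun t : Fin (n ^ 2) => A t a = A r a ∧ t ≠ r ∧ t ≠ s))
          ∪ (univ.filter (fun t : Fin (n ^ 2) => A t a ≠ A r a ∧
              (∃ b, A t b = A r b) ∧ (∃ c, A t c = A s c))) := by
      ext t
      simp only [mem_filter, mem_union, mem_univ, true_and, hG]
      constructor
      · rintro ⟨⟨hrt, b, hb⟩, ⟨hst, c, hc⟩⟩
        by_cases hta : A t a = A r a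
        · exact Or.inl ⟨hta, fun h => hrt h.symm, fun h => hst h.symm⟩
        · exact Or.inr ⟨hta, ⟨b, hb.symm⟩, ⟨c, hc.symm⟩⟩
      · rintro (⟨hta, htr, hts⟩ | ⟨hta, ⟨b, hb⟩, ⟨c, hc⟩⟩)
        · exact ⟨⟨fun h => htr h.symm, a, hta.symm⟩,
            ⟨fun h => hts h.symm, a, (hta.trans ha).symm⟩⟩
        · refine ⟨⟨fun h => hta (by rw [← h]), b, hb.symm⟩,
            ⟨fun h => hta (by rw [← h, ← ha]), c, hc.symm⟩⟩
    have hdisj : Disjoint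
        (univ.filter (fun t : Fin (n ^ 2) => A t a = A r a ∧ t ≠ r ∧ t ≠ s))
        (univ.filter (fun t : Fin (n ^ 2) => A t a ≠ A r a ∧
            (∃ b, A t b = A r b) ∧ (∃ c, A t c = A s c))) := by
      rw [Finset.disjoint_left]
      intro t ht ht'
      simp only [mem_filter, mem_univ, true_and] at ht ht'
      exact ht'.1 ht.1
    have hcard1 : (univ.filter (fun t : Fin (n ^ 2) =>
        A t a = A r a ∧ t ≠ r ∧ t ≠ s)).card = n - 2 := by
      have he : univ.filter (fun t : Fin (n ^ 2) => A t a = A r a ∧ t ≠ r ∧ t ≠ s)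
          = ((univ.filter fun t => A t a = A r a).erase r).erase s := by
        ext t
        simp only [mem_filter, mem_univ, true_and, mem_erase]
        tauto
      have hs_mem : s ∈ (univ.filter fun t : Fin (n ^ 2) => A t a = A r a).erase r :=
        mem_erase.mpr ⟨Ne.symm hrs, mem_filter.mpr ⟨mem_univ _, ha.symm⟩⟩
      have hr_mem : r ∈ (univ.filter fun t : Fin (n ^ 2) => A t a = A r a) :=
        mem_filter.mpr ⟨mem_univ _, rfl⟩
      rw [he, card_erase_of_mem hs_mem, card_erase_of_mem hr_mem, oa_col hA hk]
      omega
    have hcard2 : (univ.filter (fun t : Fin (n ^ 2) => A t a ≠ A r a ∧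
        (∃ b, A t b = A r b) ∧ (∃ c, A t c = A s c))).card = (k - 1) * (k - 2) := by
      have hbij : ((univ.erase a).offDiag).card
          = (univ.filter (fun t : Fin (n ^ 2) => A t a ≠ A r a ∧
              (∃ b, A t b = A r b) ∧ (∃ c, A t c = A s c))).card := by
        apply Finset.card_bij (fun p hp =>
          oaRow hA (Finset.mem_offDiag.mp hp).2.2 (A r p.1) (A s p.2))
        · intro p hp
          obtain ⟨h1, h2⟩ := oaRow_spec hA (Finset.mem_offDiag.mp hp).2.2 (A r p.1) (A s p.2)
          obtain ⟨hp1, hp2, hpne⟩ := Finset.mem_offDiag.mp hp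
          have hp1a : p.1 ≠ a := (mem_erase.mp hp1).1
          have hp2a : p.2 ≠ a := (mem_erase.mp hp2).1
          refine mem_filter.mpr ⟨mem_univ _, ?_, ⟨p.1, h1⟩, ⟨p.2, h2⟩⟩
          intro hta
          have : oaRow hA hpne (A r p.1) (A s p.2) = r := oa_inj hA hp1a h1 hta
          rw [this] at h2
          exact hp2a (honly p.2 h2)
        · intro p hp p' hp' heq
          obtain ⟨h1, h2⟩ := oaRow_spec hA (Finset.mem_offDiag.mp hp).2.2 (A r p.1) (A s p.2)
          obtain ⟨h1', h2'⟩ := oaRow_spec hA (Finset.mem_offDiag.mp hp').2.2 (A r p'.1) (A s p'.2)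
          rw [← heq] at h1' h2'
          set t := oaRow hA (Finset.mem_offDiag.mp hp).2.2 (A r p.1) (A s p.2) with hset
          have htr : t ≠ r := by
            intro h
            rw [h] at h2
            exact (mem_erase.mp (Finset.mem_offDiag.mp hp).2.1).1 (honly p.2 h2)
          have hts : t ≠ s := by
            intro h
            rw [h] at h1
            exact (mem_erase.mp (Finset.mem_offDiag.mp hp).1).1 (honly p.1 h1.symm)
          have hb : p.1 = p'.1 := by
            by_contra hne
            exact htr (oa_inj hA hne h1 h1')
          have hc : p.2 = p'.2 := by
            by_contra hne
            exact hts (oa_inj hA hne h2 h2')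
          exact Prod.ext hb hc
        · intro t ht
          simp only [mem_filter, mem_univ, true_and] at ht
          obtain ⟨hta, ⟨b, hb⟩, ⟨c, hc⟩⟩ := ht
          have hba : b ≠ a := fun h => hta (h ▸ hb)
          have hca : c ≠ a := by
            intro h
            rw [h] at hc
            exact hta (hc.trans ha.symm)
          have hbc : b ≠ c := by
            intro h
            rw [h] at hb
            exact hca (honly c (hb.symm.trans hc))
          have hp : (b, c) ∈ (univ.erase a).offDiag :=
            Finset.mem_offDiag.mpr ⟨mem_erase.mpr ⟨hba, mem_univ _⟩,
              mem_erase.mpr ⟨hca, mem_univ _⟩, hbc⟩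
          refine ⟨(b, c), hp, ?_⟩
          obtain ⟨h1, h2⟩ := oaRow_spec hA (Finset.mem_offDiag.mp hp).2.2 (A r b) (A s c)
          exact oa_inj hA hbc (h1.trans hb.symm) (h2.trans hc.symm)
      rw [← hbij, Finset.offDiag_card, card_erase_of_mem (mem_univ a), card_univ,
        Fintype.card_fin]
      have h2 : k - 2 = (k - 1) - 1 := by omega
      rw [h2, ← Nat.mul_sub_one]
    rw [hsplit, Finset.card_union_of_disjoint hdisj, hcard1, hcard2]
  · -- mu
    intro r s hne hnadj
    rw [hG] at hnadj
    push_neg at hnadj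
    have hdiff : ∀ c, A r c ≠ A s c := hnadj hne
    rw [hT r s]
    have hbij : (univ.offDiag : Finset (Fin k × Fin k)).card
        = (univ.filter (fun t => G.Adj r t ∧ G.Adj s t)).card := by
      apply Finset.card_bij (fun p hp =>
        oaRow hA (Finset.mem_offDiag.mp hp).2.2 (A r p.1) (A s p.2))
      · intro p hp
        obtain ⟨h1, h2⟩ := oaRow_spec hA (Finset.mem_offDiag.mp hp).2.2 (A r p.1) (A s p.2)
        set t := oaRow hA (Finset.mem_offDiag.mp hp).2.2 (A r p.1) (A s p.2) with hset
        have htr : r ≠ t := by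
          intro h
          rw [← h] at h2
          exact hdiff p.2 h2
        have hts : s ≠ t := by
          intro h
          rw [← h] at h1
          exact hdiff p.1 h1.symm
        refine mem_filter.mpr ⟨mem_univ _, ?_, ?_⟩
        · exact (hG r t).mpr ⟨htr, p.1, h1.symm⟩
        · exact (hG s t).mpr ⟨hts, p.2, h2.symm⟩
      · intro p hp p' hp' heq
        obtain ⟨h1, h2⟩ := oaRow_spec hA (Finset.mem_offDiag.mp hp).2.2 (A r p.1) (A s p.2)
        obtain ⟨h1', h2'⟩ := oaRow_spec hA (Finset.mem_offDiag.mp hp').2.2 (A r p'.1) (A s p'.2)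
        rw [← heq] at h1' h2'
        set t := oaRow hA (Finset.mem_offDiag.mp hp).2.2 (A r p.1) (A s p.2) with hset
        have htr : t ≠ r := by
          intro h
          rw [h] at h2
          exact hdiff p.2 h2
        have hts : t ≠ s := by
          intro h
          rw [h] at h1
          exact hdiff p.1 h1.symm
        have hb : p.1 = p'.1 := by
          by_contra hnee
          exact htr (oa_inj hA hnee h1 h1')
        have hc : p.2 = p'.2 := by
          by_contra hnee
          exact hts (oa_inj hA hnee h2 h2')
        exact Prod.ext hb hc
      · intro t ht
        simp only [mem_filter, mem_univ, true_and, hG] at ht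
        obtain ⟨⟨hrt, b, hb⟩, ⟨hst, c, hc⟩⟩ := ht
        have hbc : b ≠ c := by
          intro h
          rw [h] at hb
          exact hdiff c (hb.trans hc.symm)
        have hp : (b, c) ∈ (univ : Finset (Fin k)).offDiag :=
          Finset.mem_offDiag.mpr ⟨mem_univ _, mem_univ _, hbc⟩
        refine ⟨(b, c), hp, ?_⟩
        obtain ⟨h1, h2⟩ := oaRow_spec hA (Finset.mem_offDiag.mp hp).2.2 (A r b) (A s c)
        exact oa_inj hA hbc (h1.trans hb) (h2.trans hc)
    rw [← hbij, Finset.offDiag_card, card_univ, Fintype.card_fin, ← Nat.mul_sub_one]
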